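/- Let γ₁ = (a b; c d) and γ₂ = (A B; C D) be elliptic elements of SL₂(ℝ) whose fixed points in ℍ are distinct. Then |F(γ₁,γ₂)| > 1, where F(γ₁,γ₂) = ((d−a)(D−A) + 2bC + 2Bc) / (√(4−(a+d)²)·√(4−(A+D)²)). -/
import Mathlib
set_option maxHeartbeats 1000000


noncomputable section

/-- Möbius action of a real matrix on ℂ. -/
def moebR (g : Matrix (Fin 2) (Fin 2) ℝ) (z : ℂ) : ℂ :=
  ((g 0 0 : ℂ) * z + (g 0 1 : ℂ)) / ((g 1 0 : ℂ) * z + (g 1 1 : ℂ))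

lemma fixed_pt_data (a b c d : ℝ) (hdet : a * d - b * c = 1) (hell : (a + d) ^ 2 < 4)
    (z : ℂ) (hz : 0 < z.im) (hfix : moebR !![a, b; c, d] z = z) :
    c ≠ 0 ∧ d - a = -(2 * c * z.re) ∧ b = -(c * (z.re ^ 2 + z.im ^ 2)) ∧
      4 - (a + d) ^ 2 = 4 * c ^ 2 * z.im ^ 2 := by
  simp only [moebR] at hfix
  norm_num [Matrix.cons_val_zero, Matrix.cons_val_one, Matrix.head_cons] at hfix
  have hden : (c : ℂ) * z + d ≠ 0 := by
    intro h
    have him := congrArg Complex.im h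
    simp [Complex.add_im, Complex.mul_im] at him
    have hc : c = 0 := by
      rcases him with h1 | h1
      · exact h1
      · exact absurd h1 hz.ne'
    have hre := congrArg Complex.re h
    simp [Complex.add_re, Complex.mul_re, hc] at hre
    rw [hc, hre] at hdet
    norm_num at hdet
  rw [div_eq_iff hden] at hfix
  have hre := congrArg Complex.re hfix
  have him := congrArg Complex.im hfix
  simp [Complex.add_re, Complex.add_im, Complex.mul_re, Complex.mul_im] at hre him
  -- him : a * z.im = z.re * (c * z.im) + z.im * (c * z.re + d)
  have hda : d - a = -(2 * c * z.re) := by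
    have := hz.ne'
    nlinarith [him, hz]
  have hb : b = -(c * (z.re ^ 2 + z.im ^ 2)) := by linear_combination hre + z.re * hda
  have hc : c ≠ 0 := by
    intro h
    rw [h] at hda hb
    simp at hda hb
    have hda' : d = a := by linarith
    rw [hda'] at hell
    have ha : a * a = 1 := by simpa [hb, hda'] using hdet
    nlinarith [hell, ha]
  refine ⟨hc, hda, hb, ?_⟩
  linear_combination (-4 : ℝ) * hdet + (-4 * c) * hb + (-(d - a - 2 * c * z.re)) * hda

theorem stmt4 (a b c d A B C D : ℝ)
    (hdet1 : a * d - b * c = 1) (hdet2 : A * D - B * C = 1)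
    (hell1 : (a + d) ^ 2 < 4) (hell2 : (A + D) ^ 2 < 4)
    (z1 z2 : ℂ) (hz1 : 0 < z1.im) (hz2 : 0 < z2.im)
    (hfix1 : moebR !![a, b; c, d] z1 = z1) (hfix2 : moebR !![A, B; C, D] z2 = z2)
    (hne : z1 ≠ z2) :
    1 < |((d - a) * (D - A) + 2 * b * C + 2 * B * c) /
        (Real.sqrt (4 - (a + d) ^ 2) * Real.sqrt (4 - (A + D) ^ 2))| := by
  obtain ⟨hc, hda, hb, hsq1⟩ := fixed_pt_data a b c d hdet1 hell1 z1 hz1 hfix1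
  obtain ⟨hC, hDA, hB, hsq2⟩ := fixed_pt_data A B C D hdet2 hell2 z2 hz2 hfix2
  set x1 := z1.re; set y1 := z1.im; set x2 := z2.re; set y2 := z2.im
  have habs1 : Real.sqrt (4 - (a + d) ^ 2) = 2 * |c| * y1 := by
    rw [show 4 - (a + d) ^ 2 = (2 * |c| * y1) ^ 2 by
      rw [hsq1]; rw [mul_pow, mul_pow, sq_abs]; ring]
    exact Real.sqrt_sq (by positivity)
  have habs2 : Real.sqrt (4 - (A + D) ^ 2) = 2 * |C| * y2 := by
    rw [show 4 - (A + D) ^ 2 = (2 * |C| * y2) ^ 2 by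
      rw [hsq2]; rw [mul_pow, mul_pow, sq_abs]; ring]
    exact Real.sqrt_sq (by positivity)
  have hcpos : 0 < |c| := abs_pos.mpr hc
  have hCpos : 0 < |C| := abs_pos.mpr hC
  set S : ℝ := (x1 - x2) ^ 2 + y1 ^ 2 + y2 ^ 2 with hS
  have hSpos : 0 < S := by positivity
  have hN : (d - a) * (D - A) + 2 * b * C + 2 * B * c = -(2 * (c * C) * S) := by
    rw [hda, hDA, hb, hB, hS]; ring
  have hgap : 2 * y1 * y2 < S := by
    have : x1 ≠ x2 ∨ y1 ≠ y2 := by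
      by_contra h
      push_neg at h
      exact hne (Complex.ext h.1 h.2)
    rcases this with h | h
    · have h' : x1 - x2 ≠ 0 := sub_ne_zero.mpr h
      have : 0 < (x1 - x2) ^ 2 := by positivity
      nlinarith [sq_nonneg (y1 - y2)]
    · have h' : y1 - y2 ≠ 0 := sub_ne_zero.mpr h
      have : 0 < (y1 - y2) ^ 2 := by positivity
      nlinarith [sq_nonneg (x1 - x2)]
  have hdenpos : 0 < Real.sqrt (4 - (a + d) ^ 2) * Real.sqrt (4 - (A + D) ^ 2) := by
    rw [habs1, habs2]; positivity
  rw [abs_div, abs_of_pos hdenpos, lt_div_iff₀ hdenpos, one_mul, hN, habs1, habs2,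
    abs_neg, abs_mul, abs_mul, abs_mul, abs_of_pos hSpos]
  have h2 : |(2 : ℝ)| = 2 := by norm_num
  rw [h2]
  nlinarith [mul_pos (mul_pos hcpos hCpos) (sub_pos.mpr hgap), hz1, hz2]
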